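/- Fix r ∈ (0,1). For each n ≥ 1 let X_{1+r}^{(n)} be the n×n lower-triangular Toeplitz matrix with entries 0 above the diagonal, 1 on the diagonal and 1+r below the diagonal. Then ‖X_{1+r}^{(n)}‖/n tends to 2(1+r)/π as n → ∞, where ‖·‖ is the operator norm induced by the Euclidean norm on ℂⁿ. -/

import Mathlib

/-- The operator norm of a complex `n × n` matrix induced by the Euclidean norm on `ℂⁿ`. -/
noncomputable def matNorm {n : ℕ} (T : Matrix (Fin n) (Fin n) ℂ) : ℝ :=
  ‖Matrix.toEuclideanCLM (𝕜 := ℂ) T‖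

/-- The `n × n` lower-triangular Toeplitz matrix `X_β`. -/
noncomputable def Xmat (n : ℕ) (β : ℝ) : Matrix (Fin n) (Fin n) ℂ :=
  Matrix.of fun i j => if (i : ℕ) < (j : ℕ) then 0 else if (i : ℕ) = (j : ℕ) then 1 else (β : ℂ)

open Real Finset Filter

set_option synthInstance.maxHeartbeats 1000000
set_option maxHeartbeats 1000000

section Aux

lemma key_ineq (t : ℝ) (ht : 0 < t) (a b : ℂ) :
    (1 - t) * ‖a‖^2 + (1 - 1/t) * ‖b‖^2 ≤ ‖b - a‖^2 := by
  have h1 : |‖b‖ - ‖a‖| ≤ ‖b - a‖ := abs_norm_sub_norm_le b a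
  have h2 : (‖b‖ - ‖a‖)^2 ≤ ‖b - a‖^2 := by
    nlinarith [abs_nonneg (‖b‖ - ‖a‖), norm_nonneg (b-a), sq_abs (‖b‖ - ‖a‖)]
  have ht' : t * (1/t) = 1 := by field_simp
  nlinarith [sq_nonneg (t * ‖a‖ - ‖b‖), ht, mul_pos ht ht, norm_nonneg a, norm_nonneg b]


noncomputable def th (n : ℕ) : ℝ := Real.pi / (2*n+1)
noncomputable def vv (n i : ℕ) : ℝ := Real.sin (i * th n)
noncomputable def lam (n : ℕ) : ℝ := 2 - 2*Real.cos (th n)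

lemma th_pos (n : ℕ) : 0 < th n := by unfold th; positivity

lemma vv_pos (n : ℕ) {i : ℕ} (h1 : 1 ≤ i) (h2 : i ≤ n) : 0 < vv n i := by
  apply Real.sin_pos_of_pos_of_lt_pi
  · have h1' : (1:ℝ) ≤ i := by exact_mod_cast h1
    have := th_pos n
    positivity
  · have h2' : (i:ℝ) ≤ n := by exact_mod_cast h2
    have h : (i : ℝ) < 2*n+1 := by linarith
    calc (i:ℝ) * th n < (2*n+1) * th n := mul_lt_mul_of_pos_right h (th_pos n)
      _ = Real.pi := by unfold th; field_simp

lemma vv_rec (n i : ℕ) : vv n i + vv n (i+2) = 2*Real.cos (th n) * vv n (i+1) := by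
  unfold vv
  have h1 : (i:ℝ) * th n = ((i:ℝ)+1) * th n - th n := by ring
  have h2 : ((i+2:ℕ):ℝ) * th n = ((i:ℝ)+1) * th n + th n := by push_cast; ring
  have h3 : ((i+1:ℕ):ℝ) * th n = ((i:ℝ)+1) * th n := by push_cast; ring
  rw [h1, h2, h3, Real.sin_sub, Real.sin_add]; ring

lemma vv_end (n : ℕ) : vv n (n+1) = vv n n := by
  unfold vv
  have h : ((n+1:ℕ):ℝ) * th n = Real.pi - n * th n := by
    unfold th
    have h21 : (2*(n:ℝ)+1) ≠ 0 := by positivity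
    push_cast; field_simp; ring
  rw [h, Real.sin_pi_sub]

lemma lam_eq (n : ℕ) : lam n = (2*Real.sin (th n / 2))^2 := by
  unfold lam
  have h := Real.cos_two_mul (th n / 2)
  have h2 : 2 * (th n / 2) = th n := by ring
  rw [h2] at h
  nlinarith [Real.sin_sq_add_cos_sq (th n / 2)]

lemma sin_half_th_pos (n : ℕ) : 0 < Real.sin (th n / 2) := by
  apply Real.sin_pos_of_pos_of_lt_pi
  · linarith [th_pos n]
  · have : th n ≤ Real.pi := by
      unfold th
      rw [div_le_iff₀ (by positivity)]
      nlinarith [Real.pi_pos]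
    linarith [Real.pi_pos, th_pos n]

lemma lam_pos (n : ℕ) : 0 < lam n := by
  rw [lam_eq]; exact pow_pos (by linarith [sin_half_th_pos n]) 2

lemma sqrt_lam (n : ℕ) : Real.sqrt (lam n) = 2*Real.sin (th n / 2) := by
  rw [lam_eq, Real.sqrt_sq (by linarith [sin_half_th_pos n])]
lemma vv_zero (n : ℕ) : vv n 0 = 0 := by simp [vv]

lemma lemmaA (n : ℕ) (hn : 1 ≤ n) (y : ℕ → ℂ) :
    lam n * ∑ i ∈ range n, ‖y i‖^2 ≤ ‖y 0‖^2 + ∑ i ∈ range (n-1), ‖y (i+1) - y i‖^2 := by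
  set w : ℕ → ℝ := fun i => 1 - vv n (i+2) / vv n (i+1) with hw
  set u : ℕ → ℝ := fun i => 1 - vv n i / vv n (i+1) with hu
  have edge : ∀ i ∈ range (n-1),
      w i * ‖y i‖^2 + u (i+1) * ‖y (i+1)‖^2 ≤ ‖y (i+1) - y i‖^2 := by
    intro i hi
    have hi' : i < n - 1 := mem_range.mp hi
    have hp1 : 0 < vv n (i+1) := vv_pos n (by omega) (by omega)
    have hp2 : 0 < vv n (i+2) := vv_pos n (by omega) (by omega)
    have ht : 0 < vv n (i+2) / vv n (i+1) := div_pos hp2 hp1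
    have h := key_ineq _ ht (y i) (y (i+1))
    have h1 : 1 - 1 / (vv n (i+2) / vv n (i+1)) = u (i+1) := by
      rw [one_div_div]
    rw [h1] at h
    exact h
  have hsumle := Finset.sum_le_sum edge
  have e2 : ∑ i ∈ range (n-1), u (i+1) * ‖y (i+1)‖^2 + ‖y 0‖^2
      = ∑ i ∈ range n, u i * ‖y i‖^2 := by
    have hu0 : u 0 = 1 := by simp [hu, vv_zero]
    have h := Finset.sum_range_succ' (fun i => u i * ‖y i‖^2) (n-1)
    rw [Nat.sub_add_cancel hn] at h
    rw [h, hu0]; ring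
  have e1 : ∑ i ∈ range (n-1), w i * ‖y i‖^2 = ∑ i ∈ range n, w i * ‖y i‖^2 := by
    have hwn : w (n-1) = 0 := by
      have h1 : n-1+2 = n+1 := by omega
      have h2 : n-1+1 = n := by omega
      have hvn : 0 < vv n n := vv_pos n hn le_rfl
      simp only [hw, h1, h2, vv_end, div_self (ne_of_gt hvn), sub_self]
    have h := Finset.sum_range_succ (fun i => w i * ‖y i‖^2) (n-1)
    rw [Nat.sub_add_cancel hn] at h
    rw [h, hwn, zero_mul, add_zero]
  have hcoef : ∀ i ∈ range n, w i * ‖y i‖^2 + u i * ‖y i‖^2 = lam n * ‖y i‖^2 := by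
    intro i hi
    have hi' : i < n := mem_range.mp hi
    have hp : 0 < vv n (i+1) := vv_pos n (by omega) (by omega)
    have hr := vv_rec n i
    have hcoef' : w i + u i = lam n := by
      simp only [hw, hu, lam]
      field_simp
      linarith
    rw [← add_mul, hcoef']
  have hfin : ∑ i ∈ range (n-1), (w i * ‖y i‖^2 + u (i+1) * ‖y (i+1)‖^2) + ‖y 0‖^2
      = lam n * ∑ i ∈ range n, ‖y i‖^2 := by
    rw [Finset.sum_add_distrib, add_assoc, e2, e1, ← Finset.sum_add_distrib,
      Finset.sum_congr rfl hcoef, ← Finset.mul_sum]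
  linarith

lemma lemmaB (n : ℕ) (hn : 1 ≤ n) :
    ∑ i ∈ range n, (vv n (i+1) - vv n i)^2 = lam n * ∑ i ∈ range n, (vv n (i+1))^2 := by
  have key : ∀ i ∈ range n,
      (vv n (i+1) - vv n i)^2 - lam n * (vv n (i+1))^2
        = (fun i => vv n i ^2 - vv n i * vv n (i+1)) i
          - (fun i => vv n i ^2 - vv n i * vv n (i+1)) (i+1) := by
    intro i hi
    have hr := vv_rec n i
    simp only [lam]
    have h2 : i+1+1 = i+2 := rfl
    rw [h2]
    linear_combination (-(vv n (i+1))) * hr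
  have h := Finset.sum_congr rfl key
  rw [Finset.sum_range_sub' (fun i => vv n i ^2 - vv n i * vv n (i+1))] at h
  rw [Finset.sum_sub_distrib, ← Finset.mul_sum] at h
  simp only [vv_zero, vv_end] at h
  nlinarith [h]

/-- extension of a Euclidean vector to ℕ -/
noncomputable def ext' {n : ℕ} (x : EuclideanSpace ℂ (Fin n)) : ℕ → ℂ :=
  fun j => if h : j < n then x ⟨j, h⟩ else 0

lemma J_apply (n : ℕ) (x : EuclideanSpace ℂ (Fin n)) (i : Fin n) :
    (Matrix.toEuclideanCLM (𝕜 := ℂ) (Xmat n 1) x) i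
      = ∑ j ∈ range ((i:ℕ)+1), ext' x j := by
  show (Xmat n 1).mulVec x i = _
  simp only [Matrix.mulVec, dotProduct]
  have step1 : ∀ j : Fin n, (Xmat n 1) i j * x j
      = (fun k : ℕ => if k < (i:ℕ)+1 then ext' x k else 0) (j:ℕ) := by
    intro j
    simp only [Xmat, Matrix.of_apply, ext', j.isLt, dif_pos]
    by_cases h : (i:ℕ) < (j:ℕ)
    · simp [h, if_neg (by omega : ¬ ((j:ℕ) < (i:ℕ)+1)), not_le.mpr (Fin.lt_def.mpr h)]
    · have h2 : (j:ℕ) < (i:ℕ)+1 := by omega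
      split_ifs <;> simp [Fin.eta]
  rw [Finset.sum_congr rfl (fun j _ => step1 j),
    Fin.sum_univ_eq_sum_range (fun k : ℕ => if k < (i:ℕ)+1 then ext' x k else 0) n]
  rw [← Finset.sum_subset (Finset.range_subset_range.mpr i.isLt)
    (fun k _ hk => if_neg (by simp at hk; omega))]
  exact Finset.sum_congr rfl (fun k hk => if_pos (by simpa using hk))

lemma normsq_eq (n : ℕ) (x : EuclideanSpace ℂ (Fin n)) :
    ‖x‖^2 = ∑ k ∈ range n, ‖ext' x k‖^2 := by
  rw [EuclideanSpace.norm_eq, Real.sq_sqrt (by positivity),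
    ← Fin.sum_univ_eq_sum_range (fun k => ‖ext' x k‖^2) n]
  exact Finset.sum_congr rfl (fun i _ => by simp [ext', i.isLt])

lemma normJsq_le (n : ℕ) (hn : 1 ≤ n) (x : EuclideanSpace ℂ (Fin n)) :
    lam n * ‖Matrix.toEuclideanCLM (𝕜 := ℂ) (Xmat n 1) x‖^2 ≤ ‖x‖^2 := by
  set y : ℕ → ℂ := fun k => ∑ j ∈ range (k+1), ext' x j with hy
  have h1 : ‖Matrix.toEuclideanCLM (𝕜 := ℂ) (Xmat n 1) x‖^2 = ∑ k ∈ range n, ‖y k‖^2 := by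
    rw [normsq_eq]
    refine Finset.sum_congr rfl (fun k hk => ?_)
    have hk' : k < n := by simpa using hk
    have hx : ext' (Matrix.toEuclideanCLM (𝕜 := ℂ) (Xmat n 1) x) k = y k := by
      simp only [ext', dif_pos hk']
      simpa using J_apply n x ⟨k, hk'⟩
    rw [hx]
  have h2 := lemmaA n hn y
  have hy0 : y 0 = ext' x 0 := by simp [hy]
  have hyd : ∀ i, y (i+1) - y i = ext' x (i+1) := by
    intro i
    simp only [hy, Finset.sum_range_succ]
    ring
  rw [hy0] at h2
  rw [h1, normsq_eq]
  calc lam n * ∑ k ∈ range n, ‖y k‖^2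
      ≤ ‖ext' x 0‖^2 + ∑ i ∈ range (n-1), ‖y (i+1) - y i‖^2 := h2
    _ = ‖ext' x 0‖^2 + ∑ i ∈ range (n-1), ‖ext' x (i+1)‖^2 := by
        rw [Finset.sum_congr rfl (fun i _ => by rw [hyd i])]
    _ = ∑ k ∈ range n, ‖ext' x k‖^2 := by
        have h := Finset.sum_range_succ' (fun k => ‖ext' x k‖^2) (n-1)
        rw [Nat.sub_add_cancel hn] at h
        rw [h]; ring

lemma norm_J (n : ℕ) (hn : 1 ≤ n) :
    matNorm (Xmat n 1) = (Real.sqrt (lam n))⁻¹ := by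
  have hlam := lam_pos n
  have hsq : 0 < Real.sqrt (lam n) := Real.sqrt_pos.mpr hlam
  apply le_antisymm
  · apply ContinuousLinearMap.opNorm_le_bound _ (by positivity)
    intro x
    have h := normJsq_le n hn x
    have h2 : ‖Matrix.toEuclideanCLM (𝕜 := ℂ) (Xmat n 1) x‖^2
        ≤ ((Real.sqrt (lam n))⁻¹ * ‖x‖)^2 := by
      rw [mul_pow, ← Real.sqrt_inv, Real.sq_sqrt (by positivity)]
      rw [inv_mul_eq_div, le_div_iff₀ hlam] at *
      linarith [h]
    have := Real.sqrt_le_sqrt h2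
    rwa [Real.sqrt_sq (norm_nonneg _), Real.sqrt_sq (by positivity)] at this
  · -- lower bound via test vector
    set xv : EuclideanSpace ℂ (Fin n) :=
      WithLp.toLp 2 (fun i : Fin n => ((vv n ((i:ℕ)+1) - vv n (i:ℕ) : ℝ) : ℂ)) with hxv
    have hext : ∀ k, k < n → ext' xv k = ((vv n (k+1) - vv n k : ℝ) : ℂ) := by
      intro k hk; simp [ext', hk, hxv]
    set S2 : ℝ := ∑ k ∈ range n, (vv n (k+1))^2 with hS2
    have hS2pos : 0 < S2 := by
      apply Finset.sum_pos' (fun k _ => sq_nonneg _)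
      exact ⟨0, mem_range.mpr (by omega), pow_pos (vv_pos n le_rfl hn) 2⟩
    have hTx : ‖Matrix.toEuclideanCLM (𝕜 := ℂ) (Xmat n 1) xv‖^2 = S2 := by
      rw [normsq_eq]
      refine Finset.sum_congr rfl (fun k hk => ?_)
      have hk' : k < n := by simpa using hk
      have hx : ext' (Matrix.toEuclideanCLM (𝕜 := ℂ) (Xmat n 1) xv) k
          = ∑ j ∈ range (k+1), ext' xv j := by
        simp only [ext', dif_pos hk']
        simpa [ext'] using J_apply n xv ⟨k, hk'⟩
      have htel : ∑ j ∈ range (k+1), ext' xv j = ((vv n (k+1) : ℝ) : ℂ) := by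
        have : ∀ j ∈ range (k+1), ext' xv j
            = ((vv n (j+1) : ℝ) : ℂ) - ((vv n j : ℝ) : ℂ) := by
          intro j hj
          have hj' : j < n := by simp at hj; omega
          rw [hext j hj']; push_cast; ring
        rw [Finset.sum_congr rfl this, Finset.sum_range_sub (fun j => ((vv n j : ℝ):ℂ))]
        rw [vv_zero]; push_cast; ring
      rw [hx, htel, Complex.norm_real, Real.norm_eq_abs, sq_abs]
    have hxvn : ‖xv‖^2 = lam n * S2 := by
      rw [normsq_eq, ← lemmaB n hn]
      refine Finset.sum_congr rfl (fun k hk => ?_)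
      have hk' : k < n := by simpa using hk
      rw [hext k hk', Complex.norm_real, Real.norm_eq_abs, sq_abs]
    have hle := ContinuousLinearMap.le_opNorm (Matrix.toEuclideanCLM (𝕜 := ℂ) (Xmat n 1)) xv
    have hTxn : ‖Matrix.toEuclideanCLM (𝕜 := ℂ) (Xmat n 1) xv‖ = Real.sqrt S2 := by
      rw [← hTx, Real.sqrt_sq (norm_nonneg _)]
    have hxvn' : ‖xv‖ = Real.sqrt (lam n) * Real.sqrt S2 := by
      rw [← Real.sqrt_mul (le_of_lt hlam), ← hxvn, Real.sqrt_sq (norm_nonneg _)]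
    rw [hTxn, hxvn'] at hle
    have hS2sq : 0 < Real.sqrt S2 := Real.sqrt_pos.mpr hS2pos
    have hmn : matNorm (Xmat n 1) = ‖Matrix.toEuclideanCLM (𝕜 := ℂ) (Xmat n 1)‖ := rfl
    have h2 : 1 * Real.sqrt S2 ≤ (matNorm (Xmat n 1) * Real.sqrt (lam n)) * Real.sqrt S2 := by
      rw [hmn]; linarith [hle]
    have h3 : 1 ≤ matNorm (Xmat n 1) * Real.sqrt (lam n) :=
      le_of_mul_le_mul_right h2 hS2sq
    rw [inv_eq_one_div, div_le_iff₀ hsq]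
    exact h3


lemma Xdecomp (n : ℕ) (r : ℝ) :
    Xmat n (1+r) = ((1+r : ℝ):ℂ) • Xmat n 1 - (r:ℂ) • (1 : Matrix (Fin n) (Fin n) ℂ) := by
  ext i j
  simp only [Xmat, Matrix.sub_apply, Matrix.smul_apply, Matrix.one_apply, Matrix.of_apply,
    smul_eq_mul]
  by_cases h1 : (i:ℕ) < (j:ℕ)
  · have : i ≠ j := by intro h; subst h; omega
    simp [h1, this]
  · by_cases h2 : (i:ℕ) = (j:ℕ)
    · have : i = j := Fin.ext h2
      subst this
      simp [h1, h2]
    · have : i ≠ j := fun h => h2 (by rw [h])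
      simp [h1, h2, this]

lemma matNorm_bound (n : ℕ) (hn : 1 ≤ n) (r : ℝ) (hr0 : 0 ≤ r) :
    |matNorm (Xmat n (1+r)) - (1+r) * matNorm (Xmat n 1)| ≤ r := by
  haveI : Nonempty (Fin n) := ⟨⟨0, hn⟩⟩
  haveI : Nontrivial (EuclideanSpace ℂ (Fin n)) := inferInstance
  have hone : ‖(1 : EuclideanSpace ℂ (Fin n) →L[ℂ] EuclideanSpace ℂ (Fin n))‖ = 1 := by
    rw [ContinuousLinearMap.one_def, ContinuousLinearMap.norm_id]
  have hc : ‖((1+r : ℝ):ℂ)‖ = 1+r := by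
    rw [Complex.norm_real, Real.norm_eq_abs, abs_of_nonneg (by linarith)]
  have hrn : ‖((r : ℝ):ℂ)‖ = r := by
    rw [Complex.norm_real, Real.norm_eq_abs, abs_of_nonneg hr0]
  set T := Matrix.toEuclideanCLM (𝕜 := ℂ) (Xmat n 1) with hT
  have hXT : matNorm (Xmat n (1+r))
      = ‖((1+r : ℝ):ℂ) • T - ((r:ℝ):ℂ) • (1 : EuclideanSpace ℂ (Fin n) →L[ℂ] EuclideanSpace ℂ (Fin n))‖ := by
    unfold matNorm
    rw [Xdecomp n r, map_sub, map_smul, map_smul, map_one]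
  have hJT : matNorm (Xmat n 1) = ‖T‖ := rfl
  have e1 : ‖((1+r : ℝ):ℂ) • T‖ = (1+r) * ‖T‖ := by
    have h := norm_smul (((1+r : ℝ)):ℂ) T
    rw [hc] at h
    exact h
  have e2 : ‖((r:ℝ):ℂ) • (1 : EuclideanSpace ℂ (Fin n) →L[ℂ] EuclideanSpace ℂ (Fin n))‖ = r := by
    have h := norm_smul (((r : ℝ)):ℂ)
      (1 : EuclideanSpace ℂ (Fin n) →L[ℂ] EuclideanSpace ℂ (Fin n))
    rw [hrn, hone, mul_one] at h
    exact h
  rw [abs_le]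
  constructor
  · have h : ‖((1+r : ℝ):ℂ) • T‖ ≤ matNorm (Xmat n (1+r))
        + ‖((r:ℝ):ℂ) • (1 : EuclideanSpace ℂ (Fin n) →L[ℂ] EuclideanSpace ℂ (Fin n))‖ := by
      rw [hXT]
      calc ‖((1+r : ℝ):ℂ) • T‖
          = ‖(((1+r : ℝ):ℂ) • T - ((r:ℝ):ℂ) • (1 : EuclideanSpace ℂ (Fin n) →L[ℂ] EuclideanSpace ℂ (Fin n)))
              + ((r:ℝ):ℂ) • (1 : EuclideanSpace ℂ (Fin n) →L[ℂ] EuclideanSpace ℂ (Fin n))‖ := by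
            rw [sub_add_cancel]
        _ ≤ _ := norm_add_le _ _
    rw [e1, e2] at h
    rw [hJT]
    linarith
  · have h : matNorm (Xmat n (1+r)) ≤ ‖((1+r : ℝ):ℂ) • T‖
        + ‖((r:ℝ):ℂ) • (1 : EuclideanSpace ℂ (Fin n) →L[ℂ] EuclideanSpace ℂ (Fin n))‖ := by
      rw [hXT]; exact norm_sub_le _ _
    rw [e1, e2] at h
    rw [hJT]
    linarith
lemma tendsto_e : Tendsto (fun n : ℕ => th n / 2) atTop (nhds 0) := by
  have h1 : Tendsto (fun n : ℕ => (n:ℝ)) atTop atTop := tendsto_natCast_atTop_atTop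
  have h2 : Tendsto (fun n : ℕ => 4*(n:ℝ)) atTop atTop := h1.const_mul_atTop (by norm_num)
  have h3 : Tendsto (fun n : ℕ => 4*(n:ℝ)+2) atTop atTop :=
    tendsto_atTop_add_const_right atTop 2 h2
  have h4 := tendsto_const_nhds.div_atTop h3 (f := fun _ : ℕ => Real.pi)
  apply h4.congr
  intro n
  unfold th
  have : (2*(n:ℝ)+1) ≠ 0 := by positivity
  field_simp
  ring_nf

lemma tendsto_g : Tendsto (fun n : ℕ => 2*(n:ℝ)*Real.sin (th n / 2)) atTop
    (nhds (Real.pi/2)) := by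
  have hslope := hasDerivAt_iff_tendsto_slope.mp (Real.hasDerivAt_sin 0)
  rw [Real.cos_zero] at hslope
  have he0 : Tendsto (fun n : ℕ => th n / 2) atTop (nhdsWithin 0 {x | x ≠ 0}) := by
    apply tendsto_nhdsWithin_of_tendsto_nhds_of_eventually_within _ tendsto_e
    exact Eventually.of_forall fun n => ne_of_gt (by linarith [th_pos n])
  have h1 := hslope.comp he0
  have hinv : Tendsto (fun n : ℕ => ((n:ℝ))⁻¹) atTop (nhds 0) :=
    tendsto_inv_atTop_nhds_zero_nat
  have h3 : Tendsto (fun n : ℕ => (2 + (n:ℝ)⁻¹)) atTop (nhds 2) := by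
    simpa using tendsto_const_nhds.add hinv
  have h4 : Tendsto (fun n : ℕ => (2 + (n:ℝ)⁻¹)⁻¹) atTop (nhds (2⁻¹ : ℝ)) :=
    h3.inv₀ (by norm_num)
  have h5 := h1.mul (h4.const_mul Real.pi)
  have hlim : (1 : ℝ) * (Real.pi * (2:ℝ)⁻¹) = Real.pi/2 := by ring
  rw [hlim] at h5
  apply h5.congr'
  filter_upwards [eventually_ge_atTop 1] with n hn
  have hnn : (0:ℝ) < n := by exact_mod_cast hn
  have hth : 0 < th n / 2 := by linarith [th_pos n]
  simp only [Function.comp_apply, slope_def_field]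
  rw [Real.sin_zero]
  unfold th at *
  have h2n : (2*(n:ℝ)+1) ≠ 0 := by positivity
  set s := Real.sin (Real.pi/(2*(n:ℝ)+1)/2) with hs
  field_simp
  ring

lemma L1 : Tendsto (fun n : ℕ => matNorm (Xmat n 1) / n) atTop (nhds (2/Real.pi)) := by
  have hg := tendsto_g
  have hπ : (Real.pi/2 : ℝ) ≠ 0 := by positivity
  have h := hg.inv₀ hπ
  have heq : (Real.pi/2 : ℝ)⁻¹ = 2/Real.pi := by rw [inv_div]
  rw [heq] at h
  apply h.congr'
  filter_upwards [eventually_ge_atTop 1] with n hn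
  have hnn : (0:ℝ) < n := by exact_mod_cast hn
  rw [norm_J n hn, sqrt_lam]
  have hs := sin_half_th_pos n
  field_simp

theorem stmt5 (r : ℝ) (hr : r ∈ Set.Ioo (0 : ℝ) 1) :
    Filter.Tendsto (fun n : ℕ => matNorm (Xmat n (1 + r)) / n) Filter.atTop
      (nhds (2 * (1 + r) / Real.pi)) := by
  obtain ⟨hr0, hr1⟩ := hr
  have hG : Tendsto (fun n : ℕ => (1+r) * (matNorm (Xmat n 1)/n)) atTop
      (nhds ((1+r)*(2/Real.pi))) := L1.const_mul (1+r)
  have hrn0 : Tendsto (fun n : ℕ => r / n) atTop (nhds 0) := by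
    have h := tendsto_inv_atTop_nhds_zero_nat.const_mul r
    rw [mul_zero] at h
    apply h.congr
    intro n
    rw [div_eq_mul_inv]
  have hz : Tendsto (fun n : ℕ => matNorm (Xmat n (1+r))/n
      - (1+r)*(matNorm (Xmat n 1)/n)) atTop (nhds 0) := by
    apply squeeze_zero_norm' _ hrn0
    filter_upwards [eventually_ge_atTop 1] with n hn
    have hnn : (0:ℝ) < n := by exact_mod_cast hn
    have hb := matNorm_bound n hn r (le_of_lt hr0)
    rw [Real.norm_eq_abs]
    have heq2 : matNorm (Xmat n (1+r))/n - (1+r)*(matNorm (Xmat n 1)/n)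
        = (matNorm (Xmat n (1+r)) - (1+r)*matNorm (Xmat n 1))/n := by ring
    rw [heq2, abs_div, abs_of_pos hnn]
    gcongr
  have hsum := hz.add hG
  rw [zero_add] at hsum
  have hfin : (1+r)*(2/Real.pi) = 2*(1+r)/Real.pi := by ring
  rw [hfin] at hsum
  apply hsum.congr
  intro n
  ring
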